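/- arXiv:2309.02669 — 2 statements merged into one kernel-verified Lean document; each statement's English description precedes it below -/
import Mathlib

section
/- Let S = {v_1,...,v_k} ⊂ ℝ^{m+1} be affinely independent, let x_{prev} ∈ conv(S) with barycentric coordinates α_{prev} (all nonnegative), and let x_t ∈ aff(S) \ conv(S) with barycentric coordinates α_t (some entry nonpositive). Define θ = min over indices i with α_{t,i} ≤ 0 of α_{prev,i}/(α_{prev,i} - α_{t,i}). Then θ ∈ [0,1] and the point θ x_t + (1-θ) x_{prev} lies in conv(S), with at least one barycentric coordinate equal to zero (it lies on a proper face of the simplex). -/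
/-- RemoveOneVertex step of AIM-mean: moving from an interior point x_prev of the
simplex towards an exterior point x_t of the affine hull, the step size
θ = min_{i : α_{t,i} ≤ 0} α_{prev,i}/(α_{prev,i} - α_{t,i}) lies in [0,1], the
intermediate point θ x_t + (1-θ) x_prev lies in the simplex, and at least one of
its barycentric coordinates vanishes (it lies on a proper face). -/
theorem stmt4 {m k : ℕ} (v : Fin k → (Fin (m + 1) → ℝ))
    (hv : AffineIndependent ℝ v)
    (αprev αt : Fin k → ℝ)
    (hprev_nonneg : ∀ i, 0 ≤ αprev i)
    (hprev_sum : ∑ i, αprev i = 1)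
    (ht_sum : ∑ i, αt i = 1)
    (xprev xt : Fin (m + 1) → ℝ)
    (hxprev : xprev = ∑ i, αprev i • v i)
    (hxt : xt = ∑ i, αt i • v i)
    (I : Finset (Fin k)) (hI : I = Finset.univ.filter (fun i => αt i ≤ 0))
    (hInonempty : I.Nonempty)
    (hdenom : ∀ i ∈ I, 0 < αprev i - αt i)
    (θ : ℝ) (hθ : θ = I.inf' hInonempty (fun i => αprev i / (αprev i - αt i))) :
    0 ≤ θ ∧ θ ≤ 1 ∧
    (∀ i, 0 ≤ θ * αt i + (1 - θ) * αprev i) ∧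
    (∑ i, (θ * αt i + (1 - θ) * αprev i) = 1) ∧
    (θ • xt + (1 - θ) • xprev = ∑ i, (θ * αt i + (1 - θ) * αprev i) • v i) ∧
    (θ • xt + (1 - θ) • xprev ∈ convexHull ℝ (Set.range v)) ∧
    (∃ j, θ * αt j + (1 - θ) * αprev j = 0) := by
  obtain ⟨j, hjI, hjθ⟩ := I.exists_mem_eq_inf' hInonempty (fun i => αprev i / (αprev i - αt i))
  have hθj : θ = αprev j / (αprev j - αt j) := by rw [hθ, hjθ]
  have hjt : αt j ≤ 0 := by
    have := hjI; rw [hI, Finset.mem_filter] at this; exact this.2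
  have hdj := hdenom j hjI
  have hθle : ∀ i ∈ I, θ ≤ αprev i / (αprev i - αt i) := by
    intro i hi; rw [hθ]; exact Finset.inf'_le _ hi
  have hθ0 : 0 ≤ θ := by
    rw [hθj]; exact div_nonneg (hprev_nonneg j) hdj.le
  have hθ1 : θ ≤ 1 := by
    rw [hθj]; exact div_le_one_of_le₀ (by linarith) hdj.le
  have hcoord : ∀ i, 0 ≤ θ * αt i + (1 - θ) * αprev i := by
    intro i
    by_cases hi : i ∈ I
    · have h1 := hθle i hi
      have hd := hdenom i hi
      have h2 : θ * (αprev i - αt i) ≤ αprev i := (le_div_iff₀ hd).mp h1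
      nlinarith
    · have hti : 0 < αt i := by
        rw [hI, Finset.mem_filter] at hi; push_neg at hi
        exact hi (Finset.mem_univ i)
      have := hprev_nonneg i
      nlinarith
  have hsum : ∑ i, (θ * αt i + (1 - θ) * αprev i) = 1 := by
    rw [Finset.sum_add_distrib, ← Finset.mul_sum, ← Finset.mul_sum, ht_sum, hprev_sum]; ring
  have hvec : θ • xt + (1 - θ) • xprev = ∑ i, (θ * αt i + (1 - θ) * αprev i) • v i := by
    rw [hxt, hxprev, Finset.smul_sum, Finset.smul_sum, ← Finset.sum_add_distrib]
    congr 1; ext i; rw [smul_smul, smul_smul, ← add_smul]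
  refine ⟨hθ0, hθ1, hcoord, hsum, hvec, ?_, ?_⟩
  · rw [hvec]
    have := Finset.centerMass_mem_convexHull (Finset.univ : Finset (Fin k))
      (w := fun i => θ * αt i + (1 - θ) * αprev i) (z := v)
      (fun i _ => hcoord i) (by rw [hsum]; norm_num)
      (fun i _ => Set.mem_range_self i)
    rwa [Finset.centerMass_eq_of_sum_1 _ _ hsum] at this
  · refine ⟨j, ?_⟩
    rw [hθj]
    field_simp
    ring
end

section
/- There exists a constrained MDP with m-dimensional constraints such that every optimal mixed policy must randomize over at least m+1 deterministic policies. Concretely: with a single state and m+1 actions, where action 0 has reward 0 and cost 0 ∈ ℝ^m, and action i (1 ≤ i ≤ m) has reward 1 and cost e_i (the i-th unit vector), the episode terminating after one action, and constraint threshold τ = (1/(m+1))·𝟙, the unique distribution over actions maximizing expected reward subject to expected cost ≤ τ componentwise is the uniform distribution over all m+1 actions; in particular any optimal mixed policy has support of size m+1. -/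
open Finset in
/-- The CMDP of Theorem 2: a single state, m+1 actions where action 0 has reward
0 and cost 0 and action i (i ≥ 1) has reward 1 and cost e_i, with threshold
τ = 1/(m+1)·𝟙.  A distribution p over actions has expected reward ∑_{i≠0} p i
and the constraints read p i ≤ 1/(m+1) for i ≠ 0.  The optimal value m/(m+1) is
attained exactly by the uniform distribution, whose support has size m+1. -/
theorem stmt8 (m : ℕ) :
    (∀ p : Fin (m + 1) → ℝ, (∀ i, 0 ≤ p i) → (∑ i, p i = 1) →
      (∀ i, i ≠ 0 → p i ≤ 1 / (m + 1)) →
      ∑ i ∈ Finset.univ.erase 0, p i ≤ (m : ℝ) / (m + 1)) ∧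
    (∀ p : Fin (m + 1) → ℝ, (∀ i, 0 ≤ p i) → (∑ i, p i = 1) →
      (∀ i, i ≠ 0 → p i ≤ 1 / (m + 1)) →
      ∑ i ∈ Finset.univ.erase 0, p i = (m : ℝ) / (m + 1) →
      p = fun _ => (1 : ℝ) / (m + 1)) ∧
    ((∀ i : Fin (m + 1), (0 : ℝ) ≤ 1 / (m + 1)) ∧
      (∑ _i : Fin (m + 1), (1 / (m + 1) : ℝ)) = 1 ∧
      (∑ _i ∈ (Finset.univ : Finset (Fin (m + 1))).erase 0, (1 / (m + 1) : ℝ))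
        = (m : ℝ) / (m + 1)) ∧
    (∀ p : Fin (m + 1) → ℝ, p = (fun _ => (1 : ℝ) / (m + 1)) →
      (Finset.univ.filter (fun i => p i ≠ 0)).card = m + 1) := by
  have hm1 : ((m : ℝ) + 1) ≠ 0 := by positivity
  have hcard : ((Finset.univ : Finset (Fin (m + 1))).erase 0).card = m := by
    rw [Finset.card_erase_of_mem (Finset.mem_univ _), Finset.card_univ, Fintype.card_fin]; omega
  have hbound : ∀ p : Fin (m + 1) → ℝ, (∀ i, i ≠ 0 → p i ≤ 1 / (m + 1)) →
      ∑ i ∈ Finset.univ.erase 0, p i ≤ (m : ℝ) / (m + 1) := by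
    intro p hc
    calc ∑ i ∈ Finset.univ.erase 0, p i
        ≤ ∑ _i ∈ (Finset.univ : Finset (Fin (m+1))).erase 0, (1 / (m + 1) : ℝ) :=
          Finset.sum_le_sum (fun i hi => hc i (Finset.ne_of_mem_erase hi))
      _ = (m : ℝ) / (m + 1) := by
          rw [Finset.sum_const, hcard, nsmul_eq_mul]; field_simp
  refine ⟨fun p _ _ hc => hbound p hc, ?_, ⟨fun _ => by positivity, ?_, ?_⟩, ?_⟩
  · intro p hpos hsum hc heq
    have hall : ∀ i ∈ (Finset.univ : Finset (Fin (m+1))).erase 0, p i = 1 / (m + 1) := by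
      have := (Finset.sum_eq_sum_iff_of_le
        (s := (Finset.univ : Finset (Fin (m+1))).erase 0) (f := p) (g := fun _ => (1 / (m + 1) : ℝ))
        (fun i hi => hc i (Finset.ne_of_mem_erase hi))).mp ?_
      · exact this
      · rw [heq, Finset.sum_const, hcard, nsmul_eq_mul]; field_simp
    have h0 : p 0 = 1 / (m + 1) := by
      have h := Finset.add_sum_erase Finset.univ p (Finset.mem_univ (0 : Fin (m+1)))
      rw [hsum] at h
      rw [heq] at h
      have : p 0 = 1 - (m : ℝ) / (m + 1) := by linarith
      rw [this]; field_simp; ring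
    funext i
    by_cases hi : i = 0
    · simpa [hi] using h0
    · exact hall i (Finset.mem_erase.mpr ⟨hi, Finset.mem_univ i⟩)
  · rw [Finset.sum_const, Finset.card_univ, Fintype.card_fin, nsmul_eq_mul]
    push_cast; field_simp
  · rw [Finset.sum_const, hcard, nsmul_eq_mul]; field_simp
  · intro p hp
    subst hp
    have : (Finset.univ.filter (fun i : Fin (m+1) => (1 / ((m:ℝ) + 1)) ≠ 0)) = Finset.univ := by
      apply Finset.filter_true_of_mem
      intro i _
      positivity
    rw [this, Finset.card_univ, Fintype.card_fin]
end
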